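/- For fixed t > 0, the upper tail T̃_m(t) of the Student t-distribution with m degrees of freedom is non-increasing in the degrees of freedom m, i.e., for integers 1 ≤ m₁ < m₂ one has T̃_{m₂}(t) ≤ T̃_{m₁}(t). -/

import Mathlib

open MeasureTheory

/-- Density of Student's t-distribution with `m` degrees of freedom. -/
noncomputable def tPDF (m : ℕ) (t : ℝ) : ℝ :=
  Real.Gamma (((m : ℝ) + 1) / 2) / (Real.sqrt (Real.pi * m) * Real.Gamma ((m : ℝ) / 2)) *
    (1 + t ^ 2 / m) ^ (-(((m : ℝ) + 1) / 2))

/-- Upper tail function of Student's t-distribution with `m` degrees of freedom. -/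
noncomputable def tTail (m : ℕ) (t : ℝ) : ℝ := ∫ s in Set.Ioi t, tPDF m s

open MeasureTheory Real Set Filter


noncomputable def Cnorm (m : ℕ) : ℝ :=
  Real.Gamma (((m : ℝ) + 1) / 2) / (Real.sqrt (Real.pi * m) * Real.Gamma ((m : ℝ) / 2))

noncomputable def gker (m : ℕ) (t : ℝ) : ℝ := (1 + t ^ 2 / m) ^ (-(((m : ℝ) + 1) / 2))

lemma base_pos {m : ℕ} (hm : 1 ≤ m) (t : ℝ) : 0 < 1 + t ^ 2 / m := by
  have : (0:ℝ) ≤ t ^ 2 / m := by positivity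
  linarith

lemma one_le_base {m : ℕ} (t : ℝ) : 1 ≤ 1 + t ^ 2 / (m:ℝ) := by
  have : (0:ℝ) ≤ t ^ 2 / m := by positivity
  linarith

lemma gker_pos {m : ℕ} (hm : 1 ≤ m) (t : ℝ) : 0 < gker m t :=
  Real.rpow_pos_of_pos (base_pos hm t) _

lemma Cnorm_pos {m : ℕ} (hm : 1 ≤ m) : 0 < Cnorm m := by
  have hm' : (0:ℝ) < m := by exact_mod_cast hm
  apply div_pos
  · exact Real.Gamma_pos_of_pos (by positivity)
  · exact mul_pos (Real.sqrt_pos.2 (by positivity)) (Real.Gamma_pos_of_pos (by positivity))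

lemma continuous_gker (m : ℕ) (hm : 1 ≤ m) : Continuous (gker m) := by
  apply Continuous.rpow_const
  · continuity
  · intro x; exact Or.inl (ne_of_gt (base_pos hm x))

lemma gker_le {m : ℕ} (hm : 1 ≤ m) (t : ℝ) : gker m t ≤ (m : ℝ) * (1 + t ^ 2)⁻¹ := by
  have hm' : (1:ℝ) ≤ m := by exact_mod_cast hm
  have h1 : gker m t ≤ (1 + t ^ 2 / m) ^ (-1 : ℝ) := by
    apply Real.rpow_le_rpow_of_exponent_le (one_le_base t)
    have : (1:ℝ) ≤ ((m:ℝ)+1)/2 := by linarith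
    linarith
  have h2 : (1 + t ^ 2 / m) ^ (-1 : ℝ) = (1 + t ^ 2 / m)⁻¹ := by
    rw [Real.rpow_neg_one]
  rw [h2] at h1
  refine h1.trans ?_
  have hmpos : (0:ℝ) < m := by linarith
  have e : (m:ℝ) * (1+t^2)⁻¹ = ((1+t^2)/m)⁻¹ := by
    field_simp
  rw [e]
  apply inv_anti₀ (by positivity)
  rw [div_le_iff₀ hmpos]
  have h := sq_nonneg t
  have h2 : t^2/m*m = t^2 := div_mul_cancel₀ _ (ne_of_gt hmpos)
  nlinarith

lemma integrable_gker {m : ℕ} (hm : 1 ≤ m) : Integrable (gker m) := by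
  apply Integrable.mono (integrable_inv_one_add_sq.const_mul (m:ℝ))
    (continuous_gker m hm).aestronglyMeasurable
  filter_upwards with t
  rw [Real.norm_eq_abs, Real.norm_eq_abs, abs_of_pos (gker_pos hm t)]
  rw [abs_of_pos (by positivity)]
  exact gker_le hm t


noncomputable def qG (m : ℕ) : ℝ :=
  Real.Gamma (((m : ℝ) + 1) / 2) / Real.Gamma ((m : ℝ) / 2)

lemma GammaHalf_pos {m : ℕ} (hm : 1 ≤ m) : 0 < Real.Gamma ((m:ℝ)/2) := by
  have : (0:ℝ) < m := by exact_mod_cast hm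
  exact Real.Gamma_pos_of_pos (by positivity)

lemma GammaHalf_pos' (m : ℕ) : 0 < Real.Gamma (((m:ℝ)+1)/2) := by
  have : (0:ℝ) ≤ m := Nat.cast_nonneg m
  exact Real.Gamma_pos_of_pos (by positivity)

lemma qG_pos {m : ℕ} (hm : 1 ≤ m) : 0 < qG m :=
  div_pos (GammaHalf_pos' m) (GammaHalf_pos hm)

lemma qG_one : qG 1 = 1 / Real.sqrt π := by
  unfold qG
  norm_num [Real.Gamma_one, Real.Gamma_one_half_eq]

lemma qG_mul {m : ℕ} (hm : 1 ≤ m) : qG m * qG (m + 1) = m / 2 := by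
  have hm' : (0:ℝ) < m := by exact_mod_cast hm
  have h1 : Real.Gamma (((m:ℝ)+1+1)/2) = (m/2) * Real.Gamma ((m:ℝ)/2) := by
    have : ((m:ℝ)+1+1)/2 = (m:ℝ)/2 + 1 := by ring
    rw [this, Real.Gamma_add_one (by positivity)]
  unfold qG
  push_cast
  rw [h1]
  have g1 := (GammaHalf_pos hm).ne'
  have g2 := (GammaHalf_pos' m).ne'
  field_simp

lemma qG_succ_succ {m : ℕ} (hm : 1 ≤ m) : qG (m + 2) = qG m * (((m:ℝ) + 1) / m) := by
  have hm' : (0:ℝ) < m := by exact_mod_cast hm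
  have h1 : Real.Gamma (((m:ℝ)+2+1)/2) = (((m:ℝ)+1)/2) * Real.Gamma (((m:ℝ)+1)/2) := by
    have : ((m:ℝ)+2+1)/2 = ((m:ℝ)+1)/2 + 1 := by ring
    rw [this, Real.Gamma_add_one (by positivity)]
  have h2 : Real.Gamma (((m:ℝ)+2)/2) = ((m:ℝ)/2) * Real.Gamma ((m:ℝ)/2) := by
    have : ((m:ℝ)+2)/2 = (m:ℝ)/2 + 1 := by ring
    rw [this, Real.Gamma_add_one (by positivity)]
  unfold qG
  push_cast
  rw [h1, h2]
  have g1 := (GammaHalf_pos hm).ne'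
  have g2 := (GammaHalf_pos' m).ne'
  field_simp

lemma qG_wallis (k : ℕ) : π * qG (2 * k + 1) ^ 2 = (2 * (k:ℝ) + 1) * Real.Wallis.W k := by
  induction k with
  | zero =>
    simp [Real.Wallis.W, qG_one]
    rw [Real.sq_sqrt Real.pi_pos.le]
    field_simp
  | succ k ih =>
    have h2 : 2 * (k+1) + 1 = (2*k+1) + 2 := by ring
    rw [h2, qG_succ_succ (by omega), Real.Wallis.W_succ]
    have hk : (0:ℝ) < 2*(k:ℝ)+1 := by positivity
    push_cast
    have hW : Real.Wallis.W k = π * qG (2*k+1)^2 / (2*(k:ℝ)+1) := by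
      rw [ih]; field_simp
    rw [hW]
    field_simp
    ring

noncomputable def Aa (n : ℕ) : ℝ := 4 * qG n ^ 4 * ((n:ℝ) + 1) / (n:ℝ) ^ 3

lemma Aa_step {n : ℕ} (hn : 1 ≤ n) : Aa n ≤ Aa (n + 2) := by
  have hx : (1:ℝ) ≤ (n:ℝ) := by exact_mod_cast hn
  have hx0 : (0:ℝ) < n := by linarith
  have hq := qG_pos hn
  have heq : Aa (n + 2) = Aa n * (((n:ℝ)+1)^3 * ((n:ℝ)+3) / ((n:ℝ) * ((n:ℝ)+2)^3)) := by
    unfold Aa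
    rw [qG_succ_succ hn]
    push_cast
    field_simp
    ring
  rw [heq]
  have hc : (1:ℝ) ≤ ((n:ℝ)+1)^3 * ((n:ℝ)+3) / ((n:ℝ) * ((n:ℝ)+2)^3) := by
    rw [le_div_iff₀ (by positivity)]
    nlinarith [hx]
  have hA : 0 ≤ Aa n := by unfold Aa; positivity
  nlinarith [hA, hc]

lemma Aa_chain {n : ℕ} (hn : 1 ≤ n) (j : ℕ) : Aa n ≤ Aa (n + 2 * j) := by
  induction j with
  | zero => simp
  | succ j ih =>
    have : n + 2 * (j + 1) = (n + 2 * j) + 2 := by ring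
    rw [this]
    exact ih.trans (Aa_step (by omega))

lemma tendsto_ratio (b c : ℝ) :
    Filter.Tendsto (fun k : ℕ => ((2:ℝ) * k + b) / (2 * k + c)) atTop (nhds 1) := by
  have hlin : Filter.Tendsto (fun k : ℕ => (2:ℝ) * k + c) atTop atTop :=
    tendsto_atTop_add_const_right _ c (tendsto_natCast_atTop_atTop.const_mul_atTop two_pos)
  have h0 : Filter.Tendsto (fun k : ℕ => (b - c) * ((2:ℝ) * k + c)⁻¹) atTop (nhds 0) := by
    simpa using (hlin.inv_tendsto_atTop).const_mul (b - c)
  have h1 : Filter.Tendsto (fun k : ℕ => 1 + (b - c) * ((2:ℝ) * k + c)⁻¹) atTop (nhds 1) := by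
    simpa using h0.const_add 1
  apply h1.congr'
  filter_upwards [hlin.eventually_gt_atTop 0] with k hk
  have : (2:ℝ) * k + c ≠ 0 := ne_of_gt hk
  rw [eq_div_iff this]
  field_simp
  ring

lemma tendsto_Aa_odd : Filter.Tendsto (fun k : ℕ => Aa (2 * k + 1)) atTop (nhds 1) := by
  have hπ : (0:ℝ) < π := Real.pi_pos
  have h : ∀ k : ℕ, Aa (2 * k + 1) =
      (Real.Wallis.W k / (π / 2)) ^ 2 * ((2 * (k:ℝ) + 2) / (2 * k + 1)) := by
    intro k
    have hq : qG (2 * k + 1) ^ 2 = (2 * (k:ℝ) + 1) * Real.Wallis.W k / π := by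
      rw [eq_div_iff hπ.ne', mul_comm _ π, qG_wallis k]
    unfold Aa
    have h4 : qG (2 * k + 1) ^ 4 = (qG (2 * k + 1) ^ 2) ^ 2 := by ring
    rw [h4, hq]
    push_cast
    have : (2:ℝ) * k + 1 ≠ 0 := by positivity
    field_simp
    ring
  simp only [h]
  have W1 : Filter.Tendsto (fun k : ℕ => (Real.Wallis.W k / (π / 2)) ^ 2) atTop (nhds 1) := by
    have := (Real.Wallis.tendsto_W_nhds_pi_div_two.div_const (π / 2)).pow 2
    simpa [div_self (ne_of_gt (by positivity : (0:ℝ) < π / 2))] using this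
  simpa using W1.mul (tendsto_ratio 2 1)

lemma tendsto_Aa_even : Filter.Tendsto (fun k : ℕ => Aa (2 * k + 2)) atTop (nhds 1) := by
  have hπ : (0:ℝ) < π := Real.pi_pos
  have h : ∀ k : ℕ, Aa (2 * k + 2) =
      ((π / 2) / Real.Wallis.W k) ^ 2 * (((2 * (k:ℝ) + 1) / (2 * k + 2)) ^ 2
        * ((2 * (k:ℝ) + 3) / (2 * k + 2))) := by
    intro k
    have hop : 1 ≤ 2 * k + 1 := by omega
    have hq1 : qG (2 * k + 1) ^ 2 = (2 * (k:ℝ) + 1) * Real.Wallis.W k / π := by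
      rw [eq_div_iff hπ.ne', mul_comm _ π, qG_wallis k]
    have hqpos := qG_pos hop
    have hmul := qG_mul hop
    have hq2 : qG (2 * k + 2) = (2 * (k:ℝ) + 1) / (2 * qG (2 * k + 1)) := by
      rw [eq_div_iff (by positivity)]
      push_cast at hmul ⊢
      linarith [hmul]
    have hW := Real.Wallis.W_pos k
    unfold Aa
    rw [hq2]
    have h4 : qG (2*k+1) ^ 4 = ((2 * (k:ℝ) + 1) * Real.Wallis.W k / π) ^ 2 := by
      rw [show qG (2*k+1) ^ 4 = (qG (2*k+1) ^ 2) ^ 2 by ring, hq1]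
    push_cast
    rw [div_pow, mul_pow, h4]
    have h1 : (2:ℝ) * k + 1 ≠ 0 := by positivity
    have h2 : (2:ℝ) * k + 2 ≠ 0 := by positivity
    field_simp
    ring
  simp only [h]
  have hWne : Real.Wallis.W ⁻¹ = Real.Wallis.W ⁻¹ := rfl
  have W1 : Filter.Tendsto (fun k : ℕ => ((π / 2) / Real.Wallis.W k) ^ 2) atTop (nhds 1) := by
    have hd : Filter.Tendsto (fun k : ℕ => (π / 2) / Real.Wallis.W k) atTop (nhds 1) := by
      have := Filter.Tendsto.div (tendsto_const_nhds (x := π / 2))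
        Real.Wallis.tendsto_W_nhds_pi_div_two (ne_of_gt (by positivity : (0:ℝ) < π / 2))
      simpa [div_self (ne_of_gt (by positivity : (0:ℝ) < π / 2)), Pi.div_def] using this
    simpa using hd.pow 2
  have R1 : Filter.Tendsto (fun k : ℕ => ((2 * (k:ℝ) + 1) / (2 * k + 2)) ^ 2
      * ((2 * (k:ℝ) + 3) / (2 * k + 2))) atTop (nhds 1) := by
    simpa using ((tendsto_ratio 1 2).pow 2).mul (tendsto_ratio 3 2)
  simpa using W1.mul R1

lemma Aa_le_one {m : ℕ} (hm : 1 ≤ m) : Aa m ≤ 1 := by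
  rcases Nat.even_or_odd m with he | ho
  · obtain ⟨k, hk⟩ := he
    have hk1 : 1 ≤ k := by omega
    obtain ⟨k', hk'⟩ : ∃ k', k = k' + 1 := ⟨k - 1, by omega⟩
    have hmk : m = 2 * k' + 2 := by omega
    have htd : Filter.Tendsto (fun j : ℕ => Aa (2 * (j + k') + 2)) atTop (nhds 1) :=
      tendsto_Aa_even.comp (tendsto_add_atTop_nat k')
    refine ge_of_tendsto htd ?_
    filter_upwards with j
    have : 2 * (j + k') + 2 = m + 2 * j := by omega
    rw [this]
    exact Aa_chain hm j
  · obtain ⟨k, hk⟩ := ho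
    have htd : Filter.Tendsto (fun j : ℕ => Aa (2 * (j + k) + 1)) atTop (nhds 1) :=
      tendsto_Aa_odd.comp (tendsto_add_atTop_nat k)
    refine ge_of_tendsto htd ?_
    filter_upwards with j
    have : 2 * (j + k) + 1 = m + 2 * j := by omega
    rw [this]
    exact Aa_chain hm j


lemma Cnorm_eq (m : ℕ) : Cnorm m = qG m / Real.sqrt (π * m) := by
  unfold Cnorm qG
  rw [div_div]
  ring_nf

lemma Cnorm_succ {m : ℕ} (hm : 1 ≤ m) : Cnorm m ≤ Cnorm (m + 1) := by
  have hm' : (1:ℝ) ≤ m := by exact_mod_cast hm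
  have hm0 : (0:ℝ) < m := by linarith
  have hq := qG_pos hm
  have key : 4 * qG m ^ 4 * ((m:ℝ) + 1) ≤ (m:ℝ) ^ 3 := by
    have := Aa_le_one hm
    unfold Aa at this
    rw [div_le_one (by positivity)] at this
    exact this
  have key2 : 2 * qG m ^ 2 * Real.sqrt ((m:ℝ) + 1) ≤ (m:ℝ) * Real.sqrt m := by
    have hL : (0:ℝ) ≤ 2 * qG m ^ 2 * Real.sqrt ((m:ℝ) + 1) := by positivity
    have hR : (0:ℝ) ≤ (m:ℝ) * Real.sqrt m := by positivity
    have hsq : (2 * qG m ^ 2 * Real.sqrt ((m:ℝ) + 1)) ^ 2 ≤ ((m:ℝ) * Real.sqrt m) ^ 2 := by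
      have e1 : Real.sqrt ((m:ℝ) + 1) ^ 2 = (m:ℝ) + 1 := Real.sq_sqrt (by positivity)
      have e2 : Real.sqrt (m:ℝ) ^ 2 = (m:ℝ) := Real.sq_sqrt hm0.le
      calc (2 * qG m ^ 2 * Real.sqrt ((m:ℝ) + 1)) ^ 2
          = 4 * qG m ^ 4 * (Real.sqrt ((m:ℝ) + 1) ^ 2) := by ring
        _ = 4 * qG m ^ 4 * ((m:ℝ) + 1) := by rw [e1]
        _ ≤ (m:ℝ) ^ 3 := key
        _ = (m:ℝ) ^ 2 * (Real.sqrt (m:ℝ) ^ 2) := by rw [e2]; ring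
        _ = ((m:ℝ) * Real.sqrt (m:ℝ)) ^ 2 := by ring
    exact (pow_le_pow_iff_left₀ hL hR two_ne_zero).mp hsq
  have hq1 : qG (m + 1) = (m:ℝ) / (2 * qG m) := by
    have := qG_mul hm
    rw [eq_div_iff (by positivity)]
    nlinarith [this]
  rw [Cnorm_eq, Cnorm_eq, hq1]
  push_cast
  rw [Real.sqrt_mul Real.pi_pos.le, Real.sqrt_mul Real.pi_pos.le]
  have hsp : (0:ℝ) < Real.sqrt π := Real.sqrt_pos.2 Real.pi_pos
  have hsm : (0:ℝ) < Real.sqrt m := Real.sqrt_pos.2 hm0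
  have hsm1 : (0:ℝ) < Real.sqrt ((m:ℝ) + 1) := Real.sqrt_pos.2 (by linarith)
  rw [div_le_div_iff₀ (by positivity) (by positivity)]
  have expand : (m:ℝ) / (2 * qG m) * (Real.sqrt π * Real.sqrt m)
      = Real.sqrt π * ((m:ℝ) * Real.sqrt m) / (2 * qG m) := by ring
  rw [expand, le_div_iff₀ (by positivity)]
  calc qG m * (Real.sqrt π * Real.sqrt ((m:ℝ) + 1)) * (2 * qG m)
      = Real.sqrt π * (2 * qG m ^ 2 * Real.sqrt ((m:ℝ) + 1)) := by ring
    _ ≤ Real.sqrt π * ((m:ℝ) * Real.sqrt m) := by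
        exact mul_le_mul_of_nonneg_left key2 hsp.le

lemma Cnorm_mono {a b : ℕ} (ha : 1 ≤ a) (h : a ≤ b) : Cnorm a ≤ Cnorm b := by
  induction b, h using Nat.le_induction with
  | base => exact le_refl _
  | succ n hn ih => exact ih.trans (Cnorm_succ (le_trans ha hn))


lemma Jbase_pos (u : ℝ) : (0:ℝ) < 1 + u ^ 2 := by positivity

lemma integrable_Jker {a : ℝ} (ha : 1 ≤ a) :
    Integrable (fun u : ℝ => (1 + u ^ 2) ^ (-a)) := by
  have hcont : Continuous (fun u : ℝ => (1 + u ^ 2) ^ (-a)) := by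
    apply Continuous.rpow_const
    · continuity
    · intro x; exact Or.inl (ne_of_gt (Jbase_pos x))
  apply Integrable.mono integrable_inv_one_add_sq hcont.aestronglyMeasurable
  filter_upwards with u
  have h1 : (0:ℝ) < (1 + u ^ 2) ^ (-a) := Real.rpow_pos_of_pos (Jbase_pos u) _
  rw [Real.norm_eq_abs, Real.norm_eq_abs, abs_of_pos h1, abs_of_pos (by positivity)]
  have : (1 + u ^ 2) ^ (-a) ≤ (1 + u ^ 2) ^ (-1 : ℝ) := by
    apply Real.rpow_le_rpow_of_exponent_le (by nlinarith [sq_nonneg u]) (by linarith)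
  rwa [Real.rpow_neg_one] at this

lemma hasDerivAt_Jaux (a : ℝ) (u : ℝ) :
    HasDerivAt (fun u : ℝ => u * (1 + u ^ 2) ^ (-a))
      ((1 - 2 * a) * (1 + u ^ 2) ^ (-a) + 2 * a * (1 + u ^ 2) ^ (-(a + 1))) u := by
  have hb : HasDerivAt (fun u : ℝ => 1 + u ^ 2) (2 * u) u := by
    simpa using ((hasDerivAt_pow 2 u).const_add 1)
  have hr := hb.rpow_const (p := -a) (Or.inl (ne_of_gt (Jbase_pos u)))
  have hmul := (hasDerivAt_id u).mul hr
  refine hmul.congr_deriv ?_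
  have hpos := Jbase_pos u
  have key0 : (1 + u ^ 2) ^ (-a - 1) * (1 + u ^ 2) ^ (1:ℝ) = (1 + u ^ 2) ^ (-a) := by
    rw [← Real.rpow_add hpos]
    norm_num
  rw [Real.rpow_one] at key0
  have key2 : (1 + u ^ 2) ^ (-(a + 1)) = (1 + u ^ 2) ^ (-a - 1) := by ring_nf
  rw [key2, ← key0]
  simp only [id_eq]
  ring

lemma tendsto_Jaux_atTop {a : ℝ} (ha : 1 ≤ a) :
    Tendsto (fun u : ℝ => u * (1 + u ^ 2) ^ (-a)) atTop (nhds 0) := by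
  have hbound : ∀ᶠ u : ℝ in atTop, u * (1 + u ^ 2) ^ (-a) ≤ u⁻¹ := by
    filter_upwards [eventually_gt_atTop 0] with u hu
    have h1 : (1 + u ^ 2) ^ (-a) ≤ (1 + u ^ 2)⁻¹ := by
      have := Real.rpow_le_rpow_of_exponent_le
        (by nlinarith [sq_nonneg u] : (1:ℝ) ≤ 1 + u ^ 2) (by linarith : -a ≤ -1)
      rwa [Real.rpow_neg_one] at this
    have h2 : u * (1 + u ^ 2) ^ (-a) ≤ u * (1 + u ^ 2)⁻¹ :=
      mul_le_mul_of_nonneg_left h1 hu.le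
    refine h2.trans ?_
    rw [show u * (1 + u ^ 2)⁻¹ = u / (1 + u ^ 2) by ring,
      show u⁻¹ = 1 / u by rw [inv_eq_one_div],
      div_le_div_iff₀ (Jbase_pos u) hu]
    nlinarith [sq_nonneg u]
  have hlow : ∀ᶠ u : ℝ in atTop, (0:ℝ) ≤ u * (1 + u ^ 2) ^ (-a) := by
    filter_upwards [eventually_gt_atTop 0] with u hu
    have := Real.rpow_pos_of_pos (Jbase_pos u) (-a)
    positivity
  exact tendsto_of_tendsto_of_tendsto_of_le_of_le' tendsto_const_nhds
    tendsto_inv_atTop_zero hlow hbound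

lemma tendsto_Jaux_atBot {a : ℝ} (ha : 1 ≤ a) :
    Tendsto (fun u : ℝ => u * (1 + u ^ 2) ^ (-a)) atBot (nhds 0) := by
  have h := (tendsto_Jaux_atTop ha).comp tendsto_neg_atBot_atTop
  have heq : ((fun u : ℝ => u * (1 + u ^ 2) ^ (-a)) ∘ Neg.neg)
      = fun u : ℝ => -(u * (1 + u ^ 2) ^ (-a)) := by
    funext u
    simp only [Function.comp_apply, neg_sq]
    ring
  rw [heq] at h
  simpa using h.neg

lemma J_recursion {a : ℝ} (ha : 1 ≤ a) :
    (∫ u : ℝ, (1 + u ^ 2) ^ (-(a + 1))) = (2 * a - 1) / (2 * a) * ∫ u : ℝ, (1 + u ^ 2) ^ (-a) := by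
  have ha1 : (1:ℝ) ≤ a + 1 := by linarith
  have hint : Integrable (fun u : ℝ =>
      (1 - 2 * a) * (1 + u ^ 2) ^ (-a) + 2 * a * (1 + u ^ 2) ^ (-(a + 1))) :=
    ((integrable_Jker ha).const_mul _).add ((integrable_Jker ha1).const_mul _)
  have hz := MeasureTheory.integral_of_hasDerivAt_of_tendsto (hasDerivAt_Jaux a)
    hint (tendsto_Jaux_atBot ha) (tendsto_Jaux_atTop ha)
  rw [sub_zero] at hz
  rw [integral_add ((integrable_Jker ha).const_mul _) ((integrable_Jker ha1).const_mul _),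
    integral_const_mul, integral_const_mul] at hz
  have h2a : (2 * a) ≠ 0 := by positivity
  rw [div_mul_eq_mul_div, eq_div_iff h2a]
  linarith [hz]

lemma J_one : (∫ u : ℝ, (1 + u ^ 2) ^ (-(1:ℝ))) = π := by
  have h : ∀ u : ℝ, (1 + u ^ 2) ^ (-(1:ℝ)) = (1 + u ^ 2)⁻¹ := fun u => Real.rpow_neg_one _
  simp_rw [h]
  exact integral_univ_inv_one_add_sq

lemma rpow_half_sq (u : ℝ) : ((1 + u ^ 2) ^ (-(1/2):ℝ)) ^ 2 = (1 + u ^ 2) ^ (-1:ℝ) := by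
  rw [← Real.rpow_natCast ((1 + u ^ 2) ^ (-(1/2):ℝ)) 2, ← Real.rpow_mul (Jbase_pos u).le]
  norm_num

lemma tendsto_F_atTop : Tendsto (fun u : ℝ => u * (1 + u ^ 2) ^ (-(1/2):ℝ)) atTop (nhds 1) := by
  have hin : Tendsto (fun u : ℝ => 1 - (1 + u ^ 2)⁻¹) atTop (nhds 1) := by
    have h2 : Tendsto (fun u : ℝ => 1 + u ^ 2) atTop atTop :=
      tendsto_atTop_add_const_left _ 1 (tendsto_pow_atTop two_ne_zero)
    have := h2.inv_tendsto_atTop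
    simpa using this.const_sub 1
  have hs : Tendsto (fun u : ℝ => Real.sqrt (1 - (1 + u ^ 2)⁻¹)) atTop (nhds 1) := by
    have := (Real.continuous_sqrt.continuousAt (x := (1:ℝ))).tendsto.comp hin
    simpa [Function.comp_def] using this
  apply hs.congr'
  filter_upwards [eventually_gt_atTop 0] with u hu
  have hnn : 0 ≤ u * (1 + u ^ 2) ^ (-(1/2):ℝ) := by
    have := Real.rpow_pos_of_pos (Jbase_pos u) (-(1/2):ℝ)
    positivity
  rw [show (1:ℝ) - (1 + u ^ 2)⁻¹ = (u * (1 + u ^ 2) ^ (-(1/2):ℝ)) ^ 2 by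
      rw [mul_pow, rpow_half_sq, Real.rpow_neg_one]
      field_simp
      ring,
    Real.sqrt_sq hnn]

lemma tendsto_F_atBot : Tendsto (fun u : ℝ => u * (1 + u ^ 2) ^ (-(1/2):ℝ)) atBot (nhds (-1)) := by
  have h := tendsto_F_atTop.comp tendsto_neg_atBot_atTop
  have heq : ((fun u : ℝ => u * (1 + u ^ 2) ^ (-(1/2):ℝ)) ∘ Neg.neg)
      = fun u : ℝ => -(u * (1 + u ^ 2) ^ (-(1/2):ℝ)) := by
    funext u
    simp only [Function.comp_apply, neg_sq]
    ring
  rw [heq] at h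
  simpa using h.neg

lemma J_three_half : (∫ u : ℝ, (1 + u ^ 2) ^ (-(3/2):ℝ)) = 2 := by
  have hder : ∀ u : ℝ, HasDerivAt (fun u : ℝ => u * (1 + u ^ 2) ^ (-(1/2):ℝ))
      ((1 + u ^ 2) ^ (-(3/2):ℝ)) u := by
    intro u
    have h := hasDerivAt_Jaux (1/2) u
    norm_num at h
    convert h using 1
  have hint : Integrable (fun u : ℝ => (1 + u ^ 2) ^ (-(3/2):ℝ)) :=
    integrable_Jker (by norm_num)
  have := MeasureTheory.integral_of_hasDerivAt_of_tendsto hder hint tendsto_F_atBot tendsto_F_atTop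
  rw [this]
  norm_num

lemma qG_two : qG 2 = Real.sqrt π / 2 := by
  unfold qG
  rw [show (((2:ℕ)):ℝ)/2 = (1:ℝ) by norm_num,
    show ((((2:ℕ)):ℝ) + 1)/2 = 1/2 + 1 by norm_num,
    Real.Gamma_add_one (by norm_num), Real.Gamma_one_half_eq, Real.Gamma_one]
  ring

lemma J_val_aux (n : ℕ) :
    ((∫ u : ℝ, (1 + u ^ 2) ^ (-(((n:ℝ) + 1 + 1) / 2))) = Real.sqrt π / qG (n + 1)) ∧
      ((∫ u : ℝ, (1 + u ^ 2) ^ (-(((n:ℝ) + 2 + 1) / 2))) = Real.sqrt π / qG (n + 2)) := by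
  induction n with
  | zero =>
    constructor
    · rw [show (((0:ℕ):ℝ) + 1 + 1) / 2 = (1:ℝ) by norm_num, J_one, qG_one]
      have h := Real.sqrt_pos.2 Real.pi_pos
      field_simp
      rw [Real.sq_sqrt Real.pi_pos.le]
    · rw [show (((0:ℕ):ℝ) + 2 + 1) / 2 = (3/2:ℝ) by norm_num, J_three_half, qG_two]
      have h := Real.sqrt_pos.2 Real.pi_pos
      field_simp
  | succ n ih =>
    constructor
    · have h := ih.2
      convert h using 3 <;> push_cast <;> ring
    · have ha : (1:ℝ) ≤ ((n:ℝ) + 1 + 1) / 2 := by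
        have : (0:ℝ) ≤ n := Nat.cast_nonneg n
        linarith
      have hrec := J_recursion ha
      have hexp : ((n:ℝ) + 1 + 1) / 2 + 1 = (((n:ℝ) + 1) + 2 + 1) / 2 := by ring
      rw [hexp] at hrec
      have hq1 := qG_pos (show 1 ≤ n + 1 by omega)
      have hqs := qG_succ_succ (show 1 ≤ n + 1 by omega)
      have hn1 : (0:ℝ) < (n:ℝ) + 1 := by positivity
      have hn2 : (0:ℝ) < (n:ℝ) + 2 := by positivity
      rw [show (((n+1:ℕ):ℝ) + 2 + 1) / 2 = (((n:ℝ) + 1) + 2 + 1) / 2 by push_cast; ring]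
      rw [hrec, ih.1]
      rw [show ((n+1+2:ℕ)) = n + 1 + 2 by rfl, hqs]
      push_cast
      rw [show 2 * (((n:ℝ) + 1 + 1) / 2) - 1 = (n:ℝ) + 1 by ring,
        show 2 * (((n:ℝ) + 1 + 1) / 2) = (n:ℝ) + 2 by ring]
      field_simp
      ring

lemma J_val {m : ℕ} (hm : 1 ≤ m) :
    (∫ u : ℝ, (1 + u ^ 2) ^ (-(((m:ℝ) + 1) / 2))) = Real.sqrt π / qG m := by
  obtain ⟨n, rfl⟩ : ∃ n, m = n + 1 := ⟨m - 1, by omega⟩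
  have h := (J_val_aux n).1
  rw [show ((((n+1:ℕ)):ℝ) + 1)/2 = ((n:ℝ) + 1 + 1)/2 by push_cast; ring]
  exact h

lemma integral_gker {m : ℕ} (hm : 1 ≤ m) :
    (∫ s : ℝ, gker m s) = Real.sqrt m * (Real.sqrt π / qG m) := by
  have hm0 : (0:ℝ) < m := by exact_mod_cast hm
  have hsm : (0:ℝ) < Real.sqrt m := Real.sqrt_pos.2 hm0
  have hcomp := Measure.integral_comp_mul_left
    (fun u : ℝ => (1 + u ^ 2) ^ (-(((m:ℝ) + 1) / 2))) ((Real.sqrt m)⁻¹)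
  have heq : ∀ s : ℝ, gker m s = (1 + ((Real.sqrt m)⁻¹ * s) ^ 2) ^ (-(((m:ℝ) + 1) / 2)) := by
    intro s
    unfold gker
    rw [mul_pow, inv_pow, Real.sq_sqrt hm0.le]
    congr 2
    rw [inv_mul_eq_div]
  simp_rw [heq]
  rw [hcomp, inv_inv, abs_of_pos hsm, smul_eq_mul, J_val hm]

lemma integrable_tPDF {m : ℕ} (hm : 1 ≤ m) : Integrable (tPDF m) := by
  have h := (integrable_gker hm).const_mul (Cnorm m)
  have heq : tPDF m = fun s => Cnorm m * gker m s := rfl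
  rw [heq]
  exact h

lemma integral_tPDF {m : ℕ} (hm : 1 ≤ m) : (∫ s : ℝ, tPDF m s) = 1 := by
  have heq : (fun s : ℝ => tPDF m s) = fun s => Cnorm m * gker m s := rfl
  rw [heq, MeasureTheory.integral_const_mul, integral_gker hm, Cnorm_eq]
  have hm0 : (0:ℝ) < m := by exact_mod_cast hm
  have hq := qG_pos hm
  have hsp : (0:ℝ) < Real.sqrt π := Real.sqrt_pos.2 Real.pi_pos
  have hsm : (0:ℝ) < Real.sqrt m := Real.sqrt_pos.2 hm0
  rw [Real.sqrt_mul Real.pi_pos.le]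
  field_simp

lemma tPDF_even (m : ℕ) (s : ℝ) : tPDF m (-s) = tPDF m s := by
  unfold tPDF
  rw [neg_sq]

lemma integral_Ioi_tPDF {m : ℕ} (hm : 1 ≤ m) : (∫ s in Ioi (0:ℝ), tPDF m s) = 1/2 := by
  have hint := integrable_tPDF hm
  have hneg := integral_comp_neg_Ioi (c := (0:ℝ)) (f := tPDF m)
  rw [neg_zero] at hneg
  have h1 : (∫ s in Iic (0:ℝ), tPDF m s) = ∫ s in Ioi (0:ℝ), tPDF m s := by
    rw [← hneg]
    simp_rw [tPDF_even]
  have h2 := intervalIntegral.integral_Iic_add_Ioi (b := (0:ℝ))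
    hint.integrableOn hint.integrableOn
  rw [integral_tPDF hm] at h2
  linarith [h1, h2]

lemma tTail_eq {m : ℕ} (hm : 1 ≤ m) {t : ℝ} (ht : 0 < t) :
    tTail m t = 1/2 - ∫ s in Ioc (0:ℝ) t, tPDF m s := by
  have hint := integrable_tPDF hm
  have hd : Disjoint (Ioc (0:ℝ) t) (Ioi t) := Ioc_disjoint_Ioi le_rfl
  have hsum := MeasureTheory.setIntegral_union hd measurableSet_Ioi
    hint.integrableOn hint.integrableOn (f := tPDF m)
  rw [Ioc_union_Ioi_eq_Ioi ht.le, integral_Ioi_tPDF hm] at hsum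
  unfold tTail
  linarith [hsum]

noncomputable def Lfun (m₁ m₂ : ℕ) (u : ℝ) : ℝ :=
  (((m₂:ℝ) + 1) / 2) * Real.log (1 + u / m₂) - (((m₁:ℝ) + 1) / 2) * Real.log (1 + u / m₁)

lemma Lfun_zero (m₁ m₂ : ℕ) : Lfun m₁ m₂ 0 = 0 := by
  simp [Lfun]

lemma hasDerivAt_Lfun {m₁ m₂ : ℕ} (h₁ : 1 ≤ m₁) (h₂ : 1 ≤ m₂) {u : ℝ} (hu : 0 ≤ u) :
    HasDerivAt (Lfun m₁ m₂)
      ((((m₂:ℝ) + 1) / 2) * (1 / ((m₂:ℝ) + u)) - (((m₁:ℝ) + 1) / 2) * (1 / ((m₁:ℝ) + u))) u := by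
  have hp : ∀ m : ℕ, 1 ≤ m → HasDerivAt (fun u : ℝ => Real.log (1 + u / m))
      (1 / ((m:ℝ) + u)) u := by
    intro m hm
    have hm0 : (0:ℝ) < m := by exact_mod_cast hm
    have hbase : (0:ℝ) < 1 + u / m := by positivity
    have hlin : HasDerivAt (fun u : ℝ => 1 + u / m) (1 / m) u := by
      simpa using ((hasDerivAt_id u).div_const (m:ℝ)).const_add 1
    have := hlin.log (ne_of_gt hbase)
    convert this using 1
    field_simp
  exact ((hp m₂ h₂).const_mul _).sub ((hp m₁ h₁).const_mul _)

lemma Lfun_deriv_eq {m₁ m₂ : ℕ} (h₁ : 1 ≤ m₁) (h₂ : 1 ≤ m₂) {u : ℝ} (hu : 0 ≤ u) :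
    deriv (Lfun m₁ m₂) u
      = (((m₂:ℝ) + 1) / 2) * (1 / ((m₂:ℝ) + u)) - (((m₁:ℝ) + 1) / 2) * (1 / ((m₁:ℝ) + u)) :=
  (hasDerivAt_Lfun h₁ h₂ hu).deriv

lemma Lfun_contOn {m₁ m₂ : ℕ} (h₁ : 1 ≤ m₁) (h₂ : 1 ≤ m₂) {D : Set ℝ} (hD : D ⊆ Ici 0) :
    ContinuousOn (Lfun m₁ m₂) D := fun u hu =>
  (hasDerivAt_Lfun h₁ h₂ (hD hu)).continuousAt.continuousWithinAt

lemma Lfun_mono {m₁ m₂ : ℕ} (h₁ : 1 ≤ m₁) (h : m₁ < m₂) :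
    StrictMonoOn (Lfun m₁ m₂) (Ici 1) := by
  have h₂ : 1 ≤ m₂ := by omega
  apply strictMonoOn_of_deriv_pos (convex_Ici 1)
    (Lfun_contOn h₁ h₂ (Ici_subset_Ici.mpr zero_le_one))
  intro u hu
  rw [interior_Ici] at hu
  have hu1 : (1:ℝ) < u := hu
  have hm₁ : (0:ℝ) < m₁ := by exact_mod_cast h₁
  have hm₂ : (0:ℝ) < m₂ := by exact_mod_cast h₂
  have hmlt : (m₁:ℝ) < m₂ := by exact_mod_cast h
  rw [Lfun_deriv_eq h₁ h₂ (by linarith)]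
  have e : (((m₂:ℝ) + 1) / 2) * (1 / ((m₂:ℝ) + u)) - (((m₁:ℝ) + 1) / 2) * (1 / ((m₁:ℝ) + u))
      = (((m₂:ℝ) - m₁) * (u - 1)) / (2 * (((m₂:ℝ) + u) * ((m₁:ℝ) + u))) := by
    have hne1 : ((m₂:ℝ) + u) ≠ 0 := by nlinarith
    have hne2 : ((m₁:ℝ) + u) ≠ 0 := by nlinarith
    field_simp
    ring
  rw [e]
  apply div_pos (by nlinarith) (by nlinarith)

lemma Lfun_anti {m₁ m₂ : ℕ} (h₁ : 1 ≤ m₁) (h : m₁ < m₂) :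
    StrictAntiOn (Lfun m₁ m₂) (Icc 0 1) := by
  have h₂ : 1 ≤ m₂ := by omega
  apply strictAntiOn_of_deriv_neg (convex_Icc 0 1)
    (Lfun_contOn h₁ h₂ Icc_subset_Ici_self)
  intro u hu
  rw [interior_Icc] at hu
  have hm₁ : (0:ℝ) < m₁ := by exact_mod_cast h₁
  have hm₂ : (0:ℝ) < m₂ := by exact_mod_cast h₂
  have hmlt : (m₁:ℝ) < m₂ := by exact_mod_cast h
  have hu0 : (0:ℝ) < u := hu.1
  have hu1 : u < 1 := hu.2
  rw [Lfun_deriv_eq h₁ h₂ hu0.le]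
  have e : (((m₂:ℝ) + 1) / 2) * (1 / ((m₂:ℝ) + u)) - (((m₁:ℝ) + 1) / 2) * (1 / ((m₁:ℝ) + u))
      = (((m₂:ℝ) - m₁) * (u - 1)) / (2 * (((m₂:ℝ) + u) * ((m₁:ℝ) + u))) := by
    have hne1 : ((m₂:ℝ) + u) ≠ 0 := by nlinarith
    have hne2 : ((m₁:ℝ) + u) ≠ 0 := by nlinarith
    field_simp
    ring
  rw [e]
  apply div_neg_of_neg_of_pos (by nlinarith) (by nlinarith)

lemma Lfun_tendsto {m₁ m₂ : ℕ} (h₁ : 1 ≤ m₁) (h : m₁ < m₂) :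
    Tendsto (Lfun m₁ m₂) atTop atTop := by
  have h₂ : 1 ≤ m₂ := by omega
  have hm₁ : (0:ℝ) < m₁ := by exact_mod_cast h₁
  have hm₂ : (0:ℝ) < m₂ := by exact_mod_cast h₂
  have hmlt : (m₁:ℝ) < m₂ := by exact_mod_cast h
  have hbound : ∀ᶠ u : ℝ in atTop,
      ((m₂:ℝ) - m₁) / 2 * Real.log (1 + u / m₂)
        + (((m₁:ℝ) + 1) / 2) * Real.log ((m₁:ℝ) / m₂) ≤ Lfun m₁ m₂ u := by
    filter_upwards [eventually_ge_atTop 0] with u hu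
    have hb₂ : (0:ℝ) < 1 + u / m₂ := by positivity
    have hb₁ : (0:ℝ) < 1 + u / m₁ := by positivity
    have hkey : Real.log ((m₁:ℝ) / m₂) ≤ Real.log (1 + u / m₂) - Real.log (1 + u / m₁) := by
      rw [← Real.log_div (ne_of_gt hb₂) (ne_of_gt hb₁)]
      apply Real.log_le_log (by positivity)
      rw [div_le_div_iff₀ hm₂ hb₁]
      have expand : (1 + u / (m₂:ℝ)) * m₂ = m₂ + u := by field_simp
      have expand2 : (m₁:ℝ) * (1 + u / m₁) = m₁ + u := by field_simp
      rw [expand, expand2]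
      linarith
    have ha₁ : (0:ℝ) ≤ ((m₁:ℝ) + 1) / 2 := by positivity
    have hmul := mul_le_mul_of_nonneg_left hkey ha₁
    unfold Lfun
    nlinarith [hmul]
  have htend : Tendsto (fun u : ℝ => ((m₂:ℝ) - m₁) / 2 * Real.log (1 + u / m₂)
      + (((m₁:ℝ) + 1) / 2) * Real.log ((m₁:ℝ) / m₂)) atTop atTop := by
    have hlog : Tendsto (fun u : ℝ => Real.log (1 + u / m₂)) atTop atTop := by
      apply Real.tendsto_log_atTop.comp
      apply tendsto_atTop_add_const_left
      exact Tendsto.atTop_div_const hm₂ tendsto_id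
    exact tendsto_atTop_add_const_right _ _ (hlog.const_mul_atTop (by linarith))
  exact tendsto_atTop_mono' atTop hbound htend

lemma tPDF_exp_form {m : ℕ} (hm : 1 ≤ m) (s : ℝ) :
    tPDF m s = Real.exp (Real.log (Cnorm m)
      + Real.log (1 + s ^ 2 / m) * (-(((m:ℝ) + 1) / 2))) := by
  have hb : (0:ℝ) < 1 + s ^ 2 / m := base_pos hm s
  rw [show tPDF m s = Cnorm m * (1 + s ^ 2 / m) ^ (-(((m:ℝ) + 1) / 2)) from rfl,
    Real.rpow_def_of_pos hb, Real.exp_add, Real.exp_log (Cnorm_pos hm)]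

lemma tPDF_le_of {m₁ m₂ : ℕ} (h₁ : 1 ≤ m₁) (h₂ : 1 ≤ m₂) {s : ℝ}
    (h : Lfun m₁ m₂ (s ^ 2) ≤ Real.log (Cnorm m₂) - Real.log (Cnorm m₁)) :
    tPDF m₁ s ≤ tPDF m₂ s := by
  rw [tPDF_exp_form h₁, tPDF_exp_form h₂]
  apply Real.exp_le_exp.mpr
  unfold Lfun at h
  linarith

lemma tPDF_ge_of {m₁ m₂ : ℕ} (h₁ : 1 ≤ m₁) (h₂ : 1 ≤ m₂) {s : ℝ}
    (h : Real.log (Cnorm m₂) - Real.log (Cnorm m₁) ≤ Lfun m₁ m₂ (s ^ 2)) :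
    tPDF m₂ s ≤ tPDF m₁ s := by
  rw [tPDF_exp_form h₁, tPDF_exp_form h₂]
  apply Real.exp_le_exp.mpr
  unfold Lfun at h
  linarith

theorem stmt_4' (m₁ m₂ : ℕ) (hm₁ : 1 ≤ m₁) (hm : m₁ < m₂) (t : ℝ) (ht : 0 < t) :
    tTail m₂ t ≤ tTail m₁ t := by
  have h₂ : 1 ≤ m₂ := by omega
  set c := Real.log (Cnorm m₂) - Real.log (Cnorm m₁) with hc
  have hc0 : 0 ≤ c :=
    sub_nonneg.2 (Real.log_le_log (Cnorm_pos hm₁) (Cnorm_mono hm₁ hm.le))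
  obtain ⟨u₁, hu₁a, hu₁b⟩ : ∃ u₁, 1 ≤ u₁ ∧ c ≤ Lfun m₁ m₂ u₁ := by
    obtain ⟨u₁, h1, h2⟩ := ((eventually_ge_atTop (1:ℝ)).and
      ((Lfun_tendsto hm₁ hm).eventually_ge_atTop c)).exists
    exact ⟨u₁, h1, h2⟩
  have hL1 : Lfun m₁ m₂ 1 ≤ c := by
    have := Lfun_anti hm₁ hm (show (0:ℝ) ∈ Icc (0:ℝ) 1 by constructor <;> norm_num)
      (show (1:ℝ) ∈ Icc (0:ℝ) 1 by constructor <;> norm_num) zero_lt_one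
    rw [Lfun_zero] at this
    linarith
  obtain ⟨u₀, hu₀mem, hu₀⟩ := intermediate_value_Icc hu₁a
    (Lfun_contOn hm₁ h₂ (fun x hx => le_trans zero_le_one hx.1)) ⟨hL1, hu₁b⟩
  have hu₀1 : (1:ℝ) ≤ u₀ := hu₀mem.1
  have hle : ∀ s : ℝ, s ^ 2 ≤ u₀ → tPDF m₁ s ≤ tPDF m₂ s := by
    intro s hs
    apply tPDF_le_of hm₁ h₂
    rcases le_total (s ^ 2) 1 with h1 | h1
    · have := (Lfun_anti hm₁ hm).antitoneOn
        (show (0:ℝ) ∈ Icc (0:ℝ) 1 by constructor <;> norm_num)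
        (show s ^ 2 ∈ Icc (0:ℝ) 1 by exact ⟨sq_nonneg s, h1⟩) (sq_nonneg s)
      rw [Lfun_zero] at this
      linarith
    · have := (Lfun_mono hm₁ hm).monotoneOn (show s ^ 2 ∈ Ici (1:ℝ) from h1)
        (show u₀ ∈ Ici (1:ℝ) from hu₀1) hs
      rw [hu₀] at this
      linarith
  have hge : ∀ s : ℝ, u₀ ≤ s ^ 2 → tPDF m₂ s ≤ tPDF m₁ s := by
    intro s hs
    apply tPDF_ge_of hm₁ h₂
    have := (Lfun_mono hm₁ hm).monotoneOn (show u₀ ∈ Ici (1:ℝ) from hu₀1)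
      (show s ^ 2 ∈ Ici (1:ℝ) from le_trans hu₀1 hs) hs
    rw [hu₀] at this
    linarith
  rcases le_total (t ^ 2) u₀ with hcase | hcase
  · rw [tTail_eq hm₁ ht, tTail_eq h₂ ht]
    have hmono : (∫ s in Ioc (0:ℝ) t, tPDF m₁ s) ≤ ∫ s in Ioc (0:ℝ) t, tPDF m₂ s := by
      apply setIntegral_mono_on (integrable_tPDF hm₁).integrableOn
        (integrable_tPDF h₂).integrableOn measurableSet_Ioc
      intro s hs
      apply hle
      have h1 : s ^ 2 ≤ t ^ 2 := by nlinarith [hs.1, hs.2]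
      linarith
    linarith
  · unfold tTail
    apply setIntegral_mono_on (integrable_tPDF h₂).integrableOn
      (integrable_tPDF hm₁).integrableOn measurableSet_Ioi
    intro s hs
    apply hge
    have hst : t < s := hs
    have h1 : t ^ 2 ≤ s ^ 2 := by nlinarith
    linarith

/-- For fixed `t > 0`, the upper tail of Student's t-distribution is non-increasing in the
degrees of freedom. -/
theorem stmt_4 (m₁ m₂ : ℕ) (hm₁ : 1 ≤ m₁) (hm : m₁ < m₂) (t : ℝ) (ht : 0 < t) :
    tTail m₂ t ≤ tTail m₁ t := by
  exact stmt_4' m₁ m₂ hm₁ hm t ht
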